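/- For e ∈ (0,1), define tr(U)(e) = e⁻⁵[ −e(33 − 35e²) + (33 − 46e² + 21e⁴) artanh(e) ]. Then tr(U)(e) > 0 for all e ∈ (0,1). -/

import Mathlib

open Real

/-- The inverse hyperbolic tangent (not yet in Mathlib). -/
noncomputable def artanh (x : ℝ) : ℝ := (1 / 2) * Real.log ((1 + x) / (1 - x))

lemma hasDerivAt_artanh {x : ℝ} (h1 : -1 < x) (h2 : x < 1) :
    HasDerivAt _root_.artanh (1 / (1 - x ^ 2)) x := by
  have hne : (1 : ℝ) - x ≠ 0 := by linarith
  have hne' : (1 : ℝ) + x ≠ 0 := by linarith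
  have hu : HasDerivAt (fun y : ℝ => (1 + y) / (1 - y)) (2 / (1 - x) ^ 2) x := by
    have h := (((hasDerivAt_id x).const_add 1).div
      (((hasDerivAt_id x).neg).const_add 1) hne)
    convert h using 1
    · rfl
    · rfl
    · funext y; simp only [Pi.div_apply, Pi.neg_apply, id_eq]; ring
    · simp only [Pi.neg_apply, id_eq]; ring
  have hpos : (0 : ℝ) < (1 + x) / (1 - x) := div_pos (by linarith) (by linarith)
  have h := (hu.log (ne_of_gt hpos)).const_mul (1 / 2 : ℝ)
  have h12 : (1 : ℝ) - x ^ 2 ≠ 0 := by nlinarith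
  have heq : (1 : ℝ) / (1 - x ^ 2) = 1 / 2 * (2 / (1 - x) ^ 2 / ((1 + x) / (1 - x))) := by
    field_simp
    ring
  rw [heq]
  exact h

lemma artanh_gt {e : ℝ} (h0 : 0 < e) (h1 : e < 1) :
    e + e ^ 3 / 3 + e ^ 5 / 5 < _root_.artanh e := by
  set g : ℝ → ℝ := fun x => _root_.artanh x - (x + x ^ 3 / 3 + x ^ 5 / 5) with hg
  have hd : ∀ x, -1 < x → x < 1 →
      HasDerivAt g (1 / (1 - x ^ 2) - (1 + x ^ 2 + x ^ 4)) x := by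
    intro x hx1 hx2
    have hp : HasDerivAt (fun y : ℝ => y + y ^ 3 / 3 + y ^ 5 / 5) (1 + x ^ 2 + x ^ 4) x := by
      have h := ((hasDerivAt_id x).add ((hasDerivAt_pow 3 x).div_const 3)).add
        ((hasDerivAt_pow 5 x).div_const 5)
      convert h using 1
      · rfl
      · rfl
      · funext y; simp only [Pi.add_apply, id_eq]
      · norm_num
    exact (hasDerivAt_artanh hx1 hx2).sub hp
  have hcont : ContinuousOn g (Set.Icc 0 e) := by
    intro x hx
    exact (hd x (by linarith [hx.1]) (by linarith [hx.2])).continuousAt.continuousWithinAt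
  have hmono : StrictMonoOn g (Set.Icc 0 e) := by
    apply strictMonoOn_of_deriv_pos (convex_Icc 0 e) hcont
    intro x hx
    rw [interior_Icc] at hx
    obtain ⟨hx1, hx2⟩ := hx
    have hx1' : (-1 : ℝ) < x := by linarith
    have hx2' : x < 1 := by linarith
    rw [(hd x hx1' hx2').deriv]
    have hne : (1 : ℝ) - x ^ 2 > 0 := by nlinarith
    have heq : 1 / (1 - x ^ 2) - (1 + x ^ 2 + x ^ 4) = x ^ 6 / (1 - x ^ 2) := by
      field_simp
      ring
    rw [heq]
    exact div_pos (by positivity) hne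
  have h := hmono (Set.left_mem_Icc.mpr h0.le) (Set.right_mem_Icc.mpr h0.le) h0
  have hg0 : g 0 = 0 := by simp [hg, _root_.artanh]
  rw [hg0] at h
  simp only [hg] at h
  linarith

theorem transversal_trace_pos :
    ∀ e ∈ Set.Ioo (0 : ℝ) 1,
      0 < e⁻¹ ^ 5 * (-(e * (33 - 35 * e ^ 2))
        + (33 - 46 * e ^ 2 + 21 * e ^ 4) * _root_.artanh e) := by
  rintro e ⟨h0, h1⟩
  have hkey := artanh_gt h0 h1
  have hq : (0 : ℝ) < 33 - 46 * e ^ 2 + 21 * e ^ 4 := by nlinarith [sq_nonneg (21 * e ^ 2 - 23)]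
  have hinv : (0 : ℝ) < e⁻¹ ^ 5 := by positivity
  have hmain : 0 < -(e * (33 - 35 * e ^ 2)) + (33 - 46 * e ^ 2 + 21 * e ^ 4) * _root_.artanh e := by
    have h2 : (33 - 46 * e ^ 2 + 21 * e ^ 4) * (e + e ^ 3 / 3 + e ^ 5 / 5)
        < (33 - 46 * e ^ 2 + 21 * e ^ 4) * _root_.artanh e :=
      mul_lt_mul_of_pos_left hkey hq
    nlinarith [pow_pos h0 5, pow_pos h0 7, pow_pos h0 9, sq_nonneg e, mul_pos h0 h0]
  exact mul_pos hinv hmain
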